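/- Let W_1, W_2, ... be i.i.d. standard Gaussians, μ̂_s their running empirical means, ε > 0, and t ≥ 1. Then P(∃ s ≥ t : |μ̂_s| ≥ ε) ≤ Σ_{k=1}^∞ 2·exp(-k·t·ε²/4) = 2/(exp(tε²/4) - 1). -/

import Mathlib

open MeasureTheory ProbabilityTheory Real
open scoped NNReal ENNReal

lemma pb_pdf_key (c x : ℝ) :
    Real.exp (c * x) * gaussianPDFReal 0 1 x =
      Real.exp (c ^ 2 / 2) * gaussianPDFReal c 1 x := by
  simp only [gaussianPDFReal, NNReal.coe_one, mul_one, sub_zero]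
  rw [mul_comm, mul_assoc, ← Real.exp_add, mul_left_comm, ← Real.exp_add]
  congr 1
  exact Real.exp_eq_exp.mpr (by ring)

lemma pb_pdf_smul (c : ℝ) : (fun x => ((gaussianPDFReal 0 1 x).toNNReal : ℝ≥0) •
      Real.exp (c * x)) = fun x => Real.exp (c ^ 2 / 2) * gaussianPDFReal c 1 x := by
  ext x
  rw [NNReal.smul_def, smul_eq_mul, Real.coe_toNNReal _ (gaussianPDFReal_nonneg 0 1 x),
    mul_comm, pb_pdf_key]

lemma pb_gauss_wd : gaussianReal 0 1 =
    MeasureTheory.volume.withDensity fun x => ((gaussianPDFReal 0 1 x).toNNReal : ℝ≥0∞) := by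
  rw [gaussianReal_of_var_ne_zero 0 one_ne_zero, gaussianPDF_def]; rfl

lemma pb_integrable_std (c : ℝ) :
    Integrable (fun x => Real.exp (c * x)) (gaussianReal 0 1) := by
  rw [pb_gauss_wd, integrable_withDensity_iff_integrable_smul
    (measurable_gaussianPDFReal 0 1).real_toNNReal, pb_pdf_smul]
  exact (integrable_gaussianPDFReal c 1).const_mul _

lemma pb_mgf_std (c : ℝ) :
    ∫ x, Real.exp (c * x) ∂(gaussianReal 0 1) = Real.exp (c ^ 2 / 2) := by
  rw [pb_gauss_wd,
    integral_withDensity_eq_integral_smul (measurable_gaussianPDFReal 0 1).real_toNNReal,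
    pb_pdf_smul, integral_const_mul, integral_gaussianPDFReal_eq_one c one_ne_zero, mul_one]

section Main
variable {Ω : Type*} [MeasurableSpace Ω] {P : Measure Ω}
    [IsProbabilityMeasure P] {W : ℕ → Ω → ℝ} (hmeas : ∀ i, Measurable (W i))
    (hindep : iIndepFun W P)
    (hdist : ∀ i, Measure.map (W i) P = gaussianReal 0 1)

include hmeas hdist in
lemma pb_int_exp (c : ℝ) (i : ℕ) : Integrable (fun ω => Real.exp (c * W i ω)) P := by
  have h := pb_integrable_std c
  rw [← hdist i, integrable_map_measure
    ((measurable_const_mul c).exp).aestronglyMeasurable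
    (hmeas i).aemeasurable] at h
  exact h

include hmeas hdist in
lemma pb_exp_int_eq (c : ℝ) (i : ℕ) :
    ∫ ω, Real.exp (c * W i ω) ∂P = Real.exp (c ^ 2 / 2) := by
  rw [← pb_mgf_std c, ← hdist i, integral_map (hmeas i).aemeasurable
    ((measurable_const_mul c).exp).aestronglyMeasurable]

include hmeas hindep hdist in
lemma pb_int_exp_sum (c : ℝ) (n : ℕ) :
    Integrable (fun ω => Real.exp (c * ∑ i ∈ Finset.range n, W i ω)) P := by
  have h := hindep.integrable_exp_mul_sum (t := c) hmeas
    (s := Finset.range n) (fun i _ => pb_int_exp hmeas hdist c i)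
  simpa [Finset.sum_apply] using h

include hmeas hindep hdist in
lemma pb_mgf_sum (c : ℝ) (n : ℕ) :
    ∫ ω, Real.exp (c * ∑ i ∈ Finset.range n, W i ω) ∂P
      = Real.exp (n * c ^ 2 / 2) := by
  have h := hindep.mgf_sum (t := c) hmeas (Finset.range n)
  simp only [mgf, Finset.sum_apply] at h
  rw [h]
  have : ∀ i ∈ Finset.range n, ∫ ω, Real.exp (c * W i ω) ∂P = Real.exp (c ^ 2 / 2) :=
    fun i _ => pb_exp_int_eq hmeas hdist c i
  rw [Finset.prod_congr rfl this, Finset.prod_const, Finset.card_range, ← Real.exp_nat_mul]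
  ring_nf

include hmeas hindep hdist in
lemma pb_submartingale (c : ℝ) :
    Submartingale (fun s ω => Real.exp (c * ∑ i ∈ Finset.range (s + 1), W i ω))
      (Filtration.natural W (fun i => (hmeas i).stronglyMeasurable)) P := by
  set hSM : ∀ i, StronglyMeasurable (W i) := fun i => (hmeas i).stronglyMeasurable
  set ℱ := Filtration.natural W hSM with hℱ
  refine submartingale_nat ?_ (fun s => pb_int_exp_sum hmeas hindep hdist c (s + 1)) ?_
  · intro s
    have hsum : StronglyMeasurable[ℱ s] (fun ω => ∑ i ∈ Finset.range (s + 1), W i ω) := by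
      refine Finset.stronglyMeasurable_fun_sum _ (fun i hi => ?_)
      exact (Filtration.stronglyAdapted_natural hSM i).mono
        (ℱ.mono (Nat.lt_succ_iff.mp (Finset.mem_range.mp hi)))
    exact Real.continuous_exp.comp_stronglyMeasurable (hsum.const_mul c)
  · intro s
    set g : Ω → ℝ := fun ω => Real.exp (c * W (s + 1) ω) with hg
    set f : Ω → ℝ := fun ω => Real.exp (c * ∑ i ∈ Finset.range (s + 1), W i ω) with hf
    have hfs : StronglyMeasurable[ℱ s] f := by
      refine Real.continuous_exp.comp_stronglyMeasurable (StronglyMeasurable.const_mul ?_ c)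
      refine Finset.stronglyMeasurable_fun_sum _ (fun i hi => ?_)
      exact (Filtration.stronglyAdapted_natural hSM i).mono
        (ℱ.mono (Nat.lt_succ_iff.mp (Finset.mem_range.mp hi)))
    have hdecomp : (fun ω => Real.exp (c * ∑ i ∈ Finset.range (s + 1 + 1), W i ω)) = f * g := by
      ext ω
      simp only [hf, hg, Pi.mul_apply, Finset.sum_range_succ (n := s + 1), mul_add, Real.exp_add]
    have hfg : Integrable (f * g) P := by
      rw [← hdecomp]; exact pb_int_exp_sum hmeas hindep hdist c (s + 1 + 1)
    have hgint : Integrable g P := pb_int_exp hmeas hdist c (s + 1)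
    have hpull : P[f * g|ℱ s] =ᵐ[P] f * P[g|ℱ s] :=
      condExp_mul_of_stronglyMeasurable_left hfs hfg hgint
    have hcond : P[g|ℱ s] =ᵐ[P] fun _ => ∫ ω, g ω ∂P := by
      refine condExp_indep_eq (hmeas (s + 1)).comap_le (ℱ.le s) ?_ ?_
      · exact (Real.measurable_exp.comp ((comap_measurable (W (s + 1))).const_mul c)).stronglyMeasurable
      · exact hindep.indep_comap_natural_of_lt hSM (Nat.lt_succ_self s)
    have hval : ∫ ω, g ω ∂P = Real.exp (c ^ 2 / 2) := pb_exp_int_eq hmeas hdist c (s + 1)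
    rw [hdecomp]
    filter_upwards [hpull, hcond] with ω h1 h2
    rw [h1, Pi.mul_apply, h2, hval]
    have h3 : (1 : ℝ) ≤ Real.exp (c ^ 2 / 2) :=
      Real.one_le_exp (by positivity)
    calc f ω = f ω * 1 := (mul_one _).symm
    _ ≤ f ω * Real.exp (c ^ 2 / 2) :=
      mul_le_mul_of_nonneg_left h3 (Real.exp_pos _).le


include hmeas hindep hdist in
lemma pb_onesided {a : ℝ} (ha : 0 < a) {n : ℕ} (hn : 1 ≤ n) :
    P {ω | ∃ s, 1 ≤ s ∧ s ≤ n ∧ a ≤ ∑ i ∈ Finset.range s, W i ω} ≤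
      ENNReal.ofReal (Real.exp (-(a ^ 2) / (2 * n))) := by
  have hn0 : (0 : ℝ) < n := by exact_mod_cast hn
  set c : ℝ := a / n with hc
  have hcpos : 0 < c := div_pos ha hn0
  set f : ℕ → Ω → ℝ := fun s ω => Real.exp (c * ∑ i ∈ Finset.range (s + 1), W i ω) with hfdef
  have hsub := pb_submartingale hmeas hindep hdist c
  have hnonneg : 0 ≤ (fun s ω => Real.exp (c * ∑ i ∈ Finset.range (s + 1), W i ω)) :=
    fun s ω => (Real.exp_pos _).le
  set ε' : ℝ≥0 := (Real.exp (c * a)).toNNReal with hε'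
  have hεc : (ε' : ℝ) = Real.exp (c * a) := Real.coe_toNNReal _ (Real.exp_pos _).le
  have hmax := maximal_ineq hsub hnonneg (ε := ε') (n - 1)
  have hn1 : n - 1 + 1 = n := Nat.succ_pred_eq_of_pos hn
  set S : Set Ω := {ω | (ε' : ℝ) ≤ (Finset.range (n - 1 + 1)).sup'
    Finset.nonempty_range_add_one fun k => Real.exp (c * ∑ i ∈ Finset.range (k + 1), W i ω)} with hS
  have hincl : {ω | ∃ s, 1 ≤ s ∧ s ≤ n ∧ a ≤ ∑ i ∈ Finset.range s, W i ω} ⊆ S := by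
    rintro ω ⟨s, hs1, hsn, hsa⟩
    have hk : s - 1 ∈ Finset.range (n - 1 + 1) := by
      rw [Finset.mem_range, hn1]
      omega
    refine le_trans ?_ (Finset.le_sup' (f := fun k => Real.exp
      (c * ∑ i ∈ Finset.range (k + 1), W i ω)) hk)
    have hs1' : s - 1 + 1 = s := Nat.succ_pred_eq_of_pos hs1
    rw [hs1', hεc]
    exact Real.exp_le_exp.mpr (mul_le_mul_of_nonneg_left hsa hcpos.le)
  have hsetint : ∫ ω in S, Real.exp (c * ∑ i ∈ Finset.range (n - 1 + 1), W i ω) ∂P ≤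
      ∫ ω, Real.exp (c * ∑ i ∈ Finset.range (n - 1 + 1), W i ω) ∂P :=
    setIntegral_le_integral (pb_int_exp_sum hmeas hindep hdist c _)
      (Filter.Eventually.of_forall (fun ω => (Real.exp_pos _).le))
  have hval : ∫ ω, Real.exp (c * ∑ i ∈ Finset.range (n - 1 + 1), W i ω) ∂P =
      Real.exp (n * c ^ 2 / 2) := by
    rw [pb_mgf_sum hmeas hindep hdist c (n - 1 + 1), hn1]
  have hbound : (ε' : ℝ≥0∞) * P S ≤ ENNReal.ofReal (Real.exp (n * c ^ 2 / 2)) := by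
    refine le_trans hmax ?_
    rw [← hval]
    exact ENNReal.ofReal_le_ofReal hsetint
  have hεne : (ε' : ℝ≥0∞) ≠ 0 := by
    simp only [ne_eq, ENNReal.coe_eq_zero]
    exact fun h => absurd (by rw [← hεc, h, NNReal.coe_zero] : (Real.exp (c*a)) = 0)
      (Real.exp_pos _).ne'
  have hεtop : (ε' : ℝ≥0∞) ≠ ⊤ := ENNReal.coe_ne_top
  have hPS : P S ≤ ENNReal.ofReal (Real.exp (n * c ^ 2 / 2)) / (ε' : ℝ≥0∞) := by
    rw [ENNReal.le_div_iff_mul_le (Or.inl hεne) (Or.inl hεtop), mul_comm]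
    exact hbound
  refine le_trans (measure_mono hincl) (le_trans hPS ?_)
  have : (ε' : ℝ≥0∞) = ENNReal.ofReal (Real.exp (c * a)) := by
    rw [ENNReal.ofReal, hε']
  rw [this, ← ENNReal.ofReal_div_of_pos (Real.exp_pos _), ← Real.exp_sub]
  refine ENNReal.ofReal_le_ofReal (Real.exp_le_exp.mpr (le_of_eq ?_))
  rw [hc]
  field_simp
  ring

include hmeas hindep hdist in
lemma pb_twosided {a : ℝ} (ha : 0 < a) {n : ℕ} (hn : 1 ≤ n) :
    P {ω | ∃ s, 1 ≤ s ∧ s ≤ n ∧ a ≤ |∑ i ∈ Finset.range s, W i ω|} ≤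
      ENNReal.ofReal (2 * Real.exp (-(a ^ 2) / (2 * n))) := by
  set W' : ℕ → Ω → ℝ := fun i ω => -W i ω with hW'
  have hm' : ∀ i, Measurable (W' i) := fun i => (hmeas i).neg
  have hi' : iIndepFun W' P :=
    hindep.comp (fun _ => Neg.neg) (fun _ => measurable_neg)
  have hd' : ∀ i, Measure.map (W' i) P = gaussianReal 0 1 := by
    intro i
    have h1 : W' i = (fun x : ℝ => -1 * x) ∘ W i := by ext ω; simp [hW']
    rw [h1, ← Measure.map_map (measurable_const_mul (-1)) (hmeas i), hdist i,
      gaussianReal_map_const_mul (-1)]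
    congr 1
    · norm_num
    · ext : 1
      norm_num
  have hsub : {ω | ∃ s, 1 ≤ s ∧ s ≤ n ∧ a ≤ |∑ i ∈ Finset.range s, W i ω|} ⊆
      {ω | ∃ s, 1 ≤ s ∧ s ≤ n ∧ a ≤ ∑ i ∈ Finset.range s, W i ω} ∪
      {ω | ∃ s, 1 ≤ s ∧ s ≤ n ∧ a ≤ ∑ i ∈ Finset.range s, W' i ω} := by
    rintro ω ⟨s, hs1, hsn, hsa⟩
    rcases le_abs.mp hsa with h | h
    · exact Or.inl ⟨s, hs1, hsn, h⟩
    · refine Or.inr ⟨s, hs1, hsn, ?_⟩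
      rw [show ∑ i ∈ Finset.range s, W' i ω = -∑ i ∈ Finset.range s, W i ω by
        simp [hW']]
      exact h
  calc P {ω | ∃ s, 1 ≤ s ∧ s ≤ n ∧ a ≤ |∑ i ∈ Finset.range s, W i ω|}
      ≤ P ({ω | ∃ s, 1 ≤ s ∧ s ≤ n ∧ a ≤ ∑ i ∈ Finset.range s, W i ω} ∪
          {ω | ∃ s, 1 ≤ s ∧ s ≤ n ∧ a ≤ ∑ i ∈ Finset.range s, W' i ω}) := measure_mono hsub
    _ ≤ P {ω | ∃ s, 1 ≤ s ∧ s ≤ n ∧ a ≤ ∑ i ∈ Finset.range s, W i ω} +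
          P {ω | ∃ s, 1 ≤ s ∧ s ≤ n ∧ a ≤ ∑ i ∈ Finset.range s, W' i ω} := measure_union_le _ _
    _ ≤ ENNReal.ofReal (Real.exp (-(a ^ 2) / (2 * n))) +
          ENNReal.ofReal (Real.exp (-(a ^ 2) / (2 * n))) :=
        add_le_add (pb_onesided hmeas hindep hdist ha hn) (pb_onesided hm' hi' hd' ha hn)
    _ = ENNReal.ofReal (2 * Real.exp (-(a ^ 2) / (2 * n))) := by
        rw [← ENNReal.ofReal_add (Real.exp_pos _).le (Real.exp_pos _).le]
        ring_nf

end Main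

/-- Peeling bound: for i.i.d. standard Gaussians with empirical means `μ̂_s`, `ε > 0` and
`t ≥ 1`, `P(∃ s ≥ t : |μ̂_s| ≥ ε) ≤ Σ_{k=1}^∞ 2·exp(-k·t·ε²/4) = 2/(exp(tε²/4) - 1)`. -/
theorem peeling_bound {Ω : Type*} [MeasurableSpace Ω] (P : Measure Ω)
    [IsProbabilityMeasure P] (W : ℕ → Ω → ℝ) (hmeas : ∀ i, Measurable (W i))
    (hindep : iIndepFun W P)
    (hdist : ∀ i, Measure.map (W i) P = gaussianReal 0 1)
    (ε : ℝ) (hε : 0 < ε) (t : ℕ) (ht : 1 ≤ t) :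
    P {ω | ∃ s : ℕ, t ≤ s ∧ ε ≤ |(∑ i ∈ Finset.range s, W i ω) / s|} ≤
        ENNReal.ofReal (∑' k : ℕ, 2 * Real.exp (-((k : ℝ) + 1) * t * ε ^ 2 / 4)) ∧
      ∑' k : ℕ, 2 * Real.exp (-((k : ℝ) + 1) * t * ε ^ 2 / 4) =
        2 / (Real.exp (t * ε ^ 2 / 4) - 1) := by
  have ht0 : (0 : ℝ) < t := by exact_mod_cast ht
  set x : ℝ := t * ε ^ 2 / 4 with hx
  have hx0 : 0 < x := by positivity
  set r : ℝ := Real.exp (-x) with hr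
  have hr0 : 0 < r := Real.exp_pos _
  have hr1 : r < 1 := by
    rw [hr, ← Real.exp_zero]
    exact Real.exp_lt_exp.mpr (by linarith)
  have hterm : ∀ k : ℕ, 2 * Real.exp (-((k : ℝ) + 1) * t * ε ^ 2 / 4) = 2 * r ^ (k + 1) := by
    intro k
    rw [hr, ← Real.exp_nat_mul]
    congr 1
    push_cast
    rw [hx]; ring
  have hsummable : Summable (fun k : ℕ => 2 * Real.exp (-((k : ℝ) + 1) * t * ε ^ 2 / 4)) := by
    rw [funext hterm]
    have h := summable_geometric_of_lt_one hr0.le hr1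
    exact ((h.mul_left r).mul_left 2).congr (by intro k; ring)
  have hex : (1 : ℝ) < Real.exp x := by
    rw [← Real.exp_zero]; exact Real.exp_lt_exp.mpr hx0
  have hgeo : ∑' k : ℕ, 2 * Real.exp (-((k : ℝ) + 1) * t * ε ^ 2 / 4) =
      2 / (Real.exp (t * ε ^ 2 / 4) - 1) := by
    rw [funext hterm]
    have hre : r * Real.exp x = 1 := by rw [hr, ← Real.exp_add]; simp
    have h1r : (1 : ℝ) - r ≠ 0 := sub_ne_zero.mpr hr1.ne'
    have hex1 : Real.exp x - 1 ≠ 0 := sub_ne_zero.mpr hex.ne'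
    have heq : (fun k : ℕ => 2 * r ^ (k + 1)) = fun k : ℕ => (2 * r) * r ^ k := by
      ext k; ring
    rw [heq, tsum_mul_left, tsum_geometric_of_lt_one hr0.le hr1, ← hx, ← div_eq_mul_inv,
      div_eq_div_iff h1r hex1]
    linear_combination 2 * hre
  refine ⟨?_, hgeo⟩
  -- Part 1
  set A : ℕ → Set Ω := fun k =>
    {ω | ∃ s, 1 ≤ s ∧ s ≤ (k + 2) * t ∧ ((k : ℝ) + 1) * t * ε ≤ |∑ i ∈ Finset.range s, W i ω|}
    with hA
  have hincl : {ω | ∃ s : ℕ, t ≤ s ∧ ε ≤ |(∑ i ∈ Finset.range s, W i ω) / s|} ⊆ ⋃ k, A k := by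
    rintro ω ⟨s, hts, hεs⟩
    have hs0 : 0 < s := le_trans ht hts
    have hs0' : (0 : ℝ) < s := by exact_mod_cast hs0
    have hsum : (s : ℝ) * ε ≤ |∑ i ∈ Finset.range s, W i ω| := by
      rw [abs_div, abs_of_pos hs0', le_div_iff₀ hs0'] at hεs
      nlinarith [hεs]
    set j : ℕ := s / t with hj
    have hj1 : 1 ≤ j := (Nat.one_le_div_iff (by omega)).mpr hts
    refine Set.mem_iUnion.mpr ⟨j - 1, s, hs0, ?_, ?_⟩
    · have h1 : j - 1 + 2 = j + 1 := by omega
      rw [h1]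
      have h3 := Nat.div_add_mod s t
      have h4 : s % t < t := Nat.mod_lt _ (by omega)
      have h2 : s < (j + 1) * t := by
        calc s = t * j + s % t := by rw [hj]; omega
        _ < t * j + t := by omega
        _ = (j + 1) * t := by ring
      omega
    · have hjs : j * t ≤ s := Nat.div_mul_le_self s t
      have hcast : ((j - 1 : ℕ) : ℝ) + 1 = (j : ℝ) := by
        have : ((j - 1 : ℕ) : ℝ) = (j : ℝ) - 1 := by
          push_cast [Nat.cast_sub hj1]; ring
        rw [this]; ring
      rw [hcast]
      calc (j : ℝ) * t * ε ≤ (s : ℝ) * ε := by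
            have : ((j * t : ℕ) : ℝ) ≤ (s : ℝ) := by exact_mod_cast hjs
            push_cast at this
            nlinarith
        _ ≤ |∑ i ∈ Finset.range s, W i ω| := hsum
  have hAk : ∀ k : ℕ, P (A k) ≤
      ENNReal.ofReal (2 * Real.exp (-((k : ℝ) + 1) * t * ε ^ 2 / 4)) := by
    intro k
    have ha : (0 : ℝ) < ((k : ℝ) + 1) * t * ε := by positivity
    have hn : 1 ≤ (k + 2) * t := by
      calc 1 ≤ t := ht
      _ ≤ (k + 2) * t := Nat.le_mul_of_pos_left t (by omega)
    refine le_trans (pb_twosided hmeas hindep hdist ha hn) ?_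
    refine ENNReal.ofReal_le_ofReal ?_
    have hKT : (((k + 2) * t : ℕ) : ℝ) = ((k : ℝ) + 2) * t := by push_cast; ring
    rw [hKT]
    have harg : -((((k : ℝ) + 1) * t * ε) ^ 2) / (2 * (((k : ℝ) + 2) * t)) ≤
        -((k : ℝ) + 1) * t * ε ^ 2 / 4 := by
      rw [div_le_div_iff₀ (by positivity) (by norm_num)]
      have hk0 : (0 : ℝ) ≤ (k : ℝ) := Nat.cast_nonneg k
      nlinarith [mul_nonneg (mul_nonneg (Nat.cast_nonneg k : (0:ℝ) ≤ (k:ℝ))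
        (by positivity : (0:ℝ) ≤ ((k:ℝ)+1))) (sq_nonneg ((t:ℝ) * ε))]
    exact mul_le_mul_of_nonneg_left (Real.exp_le_exp.mpr harg) (by norm_num)
  calc P {ω | ∃ s : ℕ, t ≤ s ∧ ε ≤ |(∑ i ∈ Finset.range s, W i ω) / s|}
      ≤ P (⋃ k, A k) := measure_mono hincl
    _ ≤ ∑' k, P (A k) := measure_iUnion_le _
    _ ≤ ∑' k : ℕ, ENNReal.ofReal (2 * Real.exp (-((k : ℝ) + 1) * t * ε ^ 2 / 4)) :=
        ENNReal.tsum_le_tsum hAk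
    _ = ENNReal.ofReal (∑' k : ℕ, 2 * Real.exp (-((k : ℝ) + 1) * t * ε ^ 2 / 4)) :=
        (ENNReal.ofReal_tsum_of_nonneg (fun k => by positivity) hsummable).symm
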